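/- For every integer n ≥ 2, the maximum running time of the K_3-bootstrap percolation process satisfies M_3(n) = ⌈log₂(n − 1)⌉. -/

import Mathlib

/-- One step of the `K_r`-bootstrap percolation process: we add every edge `uv` for which
there is an `r`-element vertex set `S` containing `u` and `v` such that every edge within `S`
other than `uv` is already present. -/
def bootStep {V : Type*} (r : ℕ) (G : SimpleGraph V) : SimpleGraph V where
  Adj u v := G.Adj u v ∨ (u ≠ v ∧ ∃ S : Finset V, S.card = r ∧ u ∈ S ∧ v ∈ S ∧
    ∀ x ∈ S, ∀ y ∈ S, x ≠ y → ¬((x = u ∧ y = v) ∨ (x = v ∧ y = u)) → G.Adj x y)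
  symm := by
    constructor
    intro a b h
    rcases h with h | ⟨hne, S, hS, ha, hb, hall⟩
    · exact Or.inl h.symm
    · refine Or.inr ⟨hne.symm, S, hS, hb, ha, ?_⟩
      intro x hx y hy hxy hno
      exact hall x hx y hy hxy (by tauto)
  loopless := by
    constructor
    intro a h
    rcases h with h | ⟨hne, _⟩
    · exact G.irrefl h
    · exact hne rfl

/-- Bounded walk relation: `bwalk G k u v` iff there is a walk of length at most `k`. -/
def bwalk {V : Type*} (G : SimpleGraph V) : ℕ → V → V → Prop
  | 0, u, v => u = v
  | (k+1), u, v => ∃ w, (u = w ∨ G.Adj u w) ∧ bwalk G k w v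

variable {V : Type*} {G : SimpleGraph V}

lemma bwalk_succ {k : ℕ} {u v : V} (h : bwalk G k u v) : bwalk G (k+1) u v := by
  induction k generalizing u with
  | zero => exact ⟨u, Or.inl rfl, h⟩
  | succ k ih => obtain ⟨w, hR, hP⟩ := h; exact ⟨w, hR, ih hP⟩

lemma bwalk_mono {k l : ℕ} (hkl : k ≤ l) {u v : V} (h : bwalk G k u v) : bwalk G l u v := by
  induction l with
  | zero => simpa [Nat.le_zero.mp hkl] using h
  | succ l ih =>
    rcases Nat.lt_or_ge k (l+1) with h' | h'
    · exact bwalk_succ (ih (Nat.lt_succ_iff.mp h'))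
    · have : k = l + 1 := le_antisymm hkl h'
      simpa [this] using h

lemma bwalk_refl (k : ℕ) (u : V) : bwalk G k u u := by
  have : bwalk G 0 u u := rfl
  exact bwalk_mono (Nat.zero_le _) this

lemma bwalk_add {a b : ℕ} {u v : V} :
    bwalk G (a + b) u v ↔ ∃ w, bwalk G a u w ∧ bwalk G b w v := by
  induction a generalizing u with
  | zero =>
    simp only [Nat.zero_add]
    constructor
    · intro h; exact ⟨u, rfl, h⟩
    · rintro ⟨w, rfl, h⟩; exact h
  | succ a ih =>
    have hrw : a + 1 + b = (a + b) + 1 := by omega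
    rw [hrw]
    constructor
    · rintro ⟨x, hR, hP⟩
      obtain ⟨w, h1, h2⟩ := ih.mp hP
      exact ⟨w, ⟨x, hR, h1⟩, h2⟩
    · rintro ⟨w, ⟨x, hR, h1⟩, h2⟩
      exact ⟨x, hR, ih.mpr ⟨w, h1, h2⟩⟩

lemma bwalk_of_walk {u v : V} (W : G.Walk u v) {k : ℕ} (hk : W.length ≤ k) :
    bwalk G k u v := by
  induction W generalizing k with
  | nil => exact bwalk_refl k _
  | cons h W ih =>
    simp only [SimpleGraph.Walk.length_cons] at hk
    obtain ⟨k', rfl⟩ : ∃ k', k = k' + 1 := ⟨k - 1, by omega⟩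
    exact ⟨_, Or.inr h, ih (by omega)⟩

lemma walk_of_bwalk {k : ℕ} {u v : V} (h : bwalk G k u v) :
    ∃ W : G.Walk u v, W.length ≤ k := by
  induction k generalizing u with
  | zero => cases h; exact ⟨SimpleGraph.Walk.nil, by simp⟩
  | succ k ih =>
    obtain ⟨w, hR, hP⟩ := h
    obtain ⟨W, hW⟩ := ih hP
    rcases hR with rfl | hadj
    · exact ⟨W, by omega⟩
    · exact ⟨SimpleGraph.Walk.cons hadj W, by simpa using by omega⟩

/-- Shortcutting: any bounded walk can be replaced by one of length < card V. -/
lemma bwalk_shortcut [Fintype V] [DecidableEq V] {k : ℕ} {u v : V} (h : bwalk G k u v) :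
    bwalk G (Fintype.card V - 1) u v := by
  obtain ⟨W, _⟩ := walk_of_bwalk h
  have hp := W.bypass_isPath
  have hlt := hp.length_lt
  exact bwalk_of_walk W.bypass (by omega)

lemma bootStep_three_adj [DecidableEq V] (G : SimpleGraph V) (u v : V) :
    (bootStep 3 G).Adj u v ↔
      G.Adj u v ∨ (u ≠ v ∧ ∃ w, w ≠ u ∧ w ≠ v ∧ G.Adj u w ∧ G.Adj w v) := by
  constructor
  · rintro (h | ⟨hne, S, hS3, hu, hv, hall⟩)
    · exact Or.inl h
    · have hsub : ¬ S ⊆ ({u, v} : Finset V) := by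
        intro hsub
        have := Finset.card_le_card hsub
        have h2 : ({u, v} : Finset V).card ≤ 2 := Finset.card_insert_le _ _ |>.trans (by simp)
        omega
      obtain ⟨w, hwS, hw⟩ := Finset.not_subset.mp hsub
      simp only [Finset.mem_insert, Finset.mem_singleton, not_or] at hw
      obtain ⟨hwu, hwv⟩ := hw
      refine Or.inr ⟨hne, w, hwu, hwv, ?_, ?_⟩
      · exact hall u hu w hwS (Ne.symm hwu) (by tauto)
      · exact hall w hwS v hv hwv (by tauto)
  · rintro (h | ⟨hne, w, hwu, hwv, h1, h2⟩)
    · exact Or.inl h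
    · refine Or.inr ⟨hne, {u, v, w}, ?_, by simp, by simp, ?_⟩
      · rw [Finset.card_insert_of_notMem (by simp [hne, Ne.symm hwu]),
          Finset.card_insert_of_notMem (by simp [Ne.symm hwv]), Finset.card_singleton]
      · intro x hx y hy hxy hno
        simp only [Finset.mem_insert, Finset.mem_singleton] at hx hy
        rcases hx with rfl | rfl | rfl <;> rcases hy with rfl | rfl | rfl <;>
          first
          | exact h1
          | exact h1.symm
          | exact h2
          | exact h2.symm
          | simp_all

lemma iterate_bootStep_adj [DecidableEq V] (G : SimpleGraph V) (t : ℕ) (u v : V) :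
    ((bootStep 3)^[t] G).Adj u v ↔ u ≠ v ∧ bwalk G (2 ^ t) u v := by
  induction t generalizing u v with
  | zero =>
    simp only [Function.iterate_zero, id_eq, pow_zero]
    constructor
    · intro h
      exact ⟨h.ne, v, Or.inr h, rfl⟩
    · rintro ⟨hne, w, hR, hP⟩
      cases hP
      rcases hR with rfl | h
      · exact absurd rfl hne
      · exact h
  | succ t ih =>
    rw [Function.iterate_succ_apply', bootStep_three_adj]
    have hpow : (2 : ℕ) ^ (t + 1) = 2 ^ t + 2 ^ t := by ring
    rw [hpow]
    constructor
    · rintro (h | ⟨hne, w, _, _, h1, h2⟩)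
      · obtain ⟨hne, hP⟩ := (ih _ _).mp h
        exact ⟨hne, bwalk_mono (Nat.le_add_right _ _) hP⟩
      · obtain ⟨_, hP1⟩ := (ih _ _).mp h1
        obtain ⟨_, hP2⟩ := (ih _ _).mp h2
        exact ⟨hne, bwalk_add.mpr ⟨w, hP1, hP2⟩⟩
    · rintro ⟨hne, h⟩
      obtain ⟨w, h1, h2⟩ := bwalk_add.mp h
      by_cases hwu : w = u
      · subst hwu
        exact Or.inl ((ih _ _).mpr ⟨hne, h2⟩)
      · by_cases hwv : w = v
        · subst hwv
          exact Or.inl ((ih _ _).mpr ⟨hne, h1⟩)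
        · exact Or.inr ⟨hne, w, hwu, hwv, (ih _ _).mpr ⟨Ne.symm hwu, h1⟩, (ih _ _).mpr ⟨hwv, h2⟩⟩

/-- The path graph on `Fin n`. -/
def pathG (n : ℕ) : SimpleGraph (Fin n) where
  Adj i j := i.val + 1 = j.val ∨ j.val + 1 = i.val
  symm := by constructor; intro a b h; tauto
  loopless := by constructor; intro a h; omega

lemma pathG_bwalk_bound {n k : ℕ} {i j : Fin n} (h : bwalk (pathG n) k i j) :
    j.val ≤ i.val + k := by
  induction k generalizing i with
  | zero => cases h; omega
  | succ k ih =>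
    obtain ⟨w, hR, hP⟩ := h
    have := ih hP
    rcases hR with rfl | hadj
    · omega
    · rcases hadj with h' | h' <;> omega

lemma pathG_bwalk {n k : ℕ} {i j : Fin n} (h1 : i.val ≤ j.val) (h2 : j.val ≤ i.val + k) :
    bwalk (pathG n) k i j := by
  induction k generalizing i with
  | zero => have : i = j := Fin.ext (by omega); subst this; exact rfl
  | succ k ih =>
    by_cases heq : i = j
    · subst heq; exact bwalk_refl _ _
    · have hlt : i.val < j.val := by
        rcases Nat.lt_or_ge i.val j.val with h | h
        · exact h
        · exact absurd (Fin.ext (by omega)) heq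
      have hjn : j.val < n := j.isLt
      exact ⟨⟨i.val + 1, by omega⟩, Or.inr (Or.inl rfl),
        ih (show i.val + 1 ≤ j.val by omega) (show j.val ≤ i.val + 1 + k by omega)⟩

lemma mem_T_le {n : ℕ} (hn : 2 ≤ n) (t : ℕ)
    (ht : ∃ G : SimpleGraph (Fin n), (bootStep 3)^[t] G ≠ (bootStep 3)^[t - 1] G) :
    t ≤ Nat.clog 2 (n - 1) := by
  obtain ⟨G, hG⟩ := ht
  match t with
  | 0 => simp at hG
  | (s+1) =>
    have hdiff : ¬ ∀ u v, ((bootStep 3)^[s+1] G).Adj u v ↔ ((bootStep 3)^[s] G).Adj u v := by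
      intro h
      exact hG (by ext u v; exact h u v)
    push_neg at hdiff
    obtain ⟨u, v, huv⟩ := hdiff
    rw [iterate_bootStep_adj, iterate_bootStep_adj] at huv
    have hmono : (u ≠ v ∧ bwalk G (2 ^ s) u v) → (u ≠ v ∧ bwalk G (2 ^ (s+1)) u v) := by
      rintro ⟨h1, h2⟩
      exact ⟨h1, bwalk_mono (Nat.pow_le_pow_right (by norm_num) (by omega)) h2⟩
    have hL : (u ≠ v ∧ bwalk G (2 ^ (s+1)) u v) ∧ ¬ (u ≠ v ∧ bwalk G (2 ^ s) u v) := by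
      tauto
    obtain ⟨⟨hne, hb⟩, hnb⟩ := hL
    have hshort : bwalk G (n - 1) u v := by
      have := bwalk_shortcut hb
      simpa using this
    have hlt : ¬ (n - 1 ≤ 2 ^ s) := by
      intro hle
      exact hnb ⟨hne, bwalk_mono hle hshort⟩
    have : ¬ (Nat.clog 2 (n - 1) ≤ s) := by
      intro hle
      exact hlt ((Nat.clog_le_iff_le_pow one_lt_two).mp hle)
    omega

lemma clog_mem_T {n : ℕ} (hn : 3 ≤ n) :
    ∃ G : SimpleGraph (Fin n),
      (bootStep 3)^[Nat.clog 2 (n - 1)] G ≠ (bootStep 3)^[Nat.clog 2 (n - 1) - 1] G := by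
  set t := Nat.clog 2 (n - 1) with ht
  have htpos : 0 < t := Nat.clog_pos one_lt_two (by omega)
  obtain ⟨s, hs⟩ : ∃ s, t = s + 1 := ⟨t - 1, by omega⟩
  have h2s : 2 ^ s < n - 1 := by
    by_contra hc
    push_neg at hc
    have := (Nat.clog_le_iff_le_pow one_lt_two).mpr hc
    omega
  have hd : 2 ^ s + 1 ≤ n - 1 := by omega
  refine ⟨pathG n, ?_⟩
  have hu : (0 : ℕ) < n := by omega
  have hv : 2 ^ s + 1 < n := by omega
  set u : Fin n := ⟨0, hu⟩
  set v : Fin n := ⟨2 ^ s + 1, hv⟩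
  have hvu : u.val = 0 := rfl
  have hvv : v.val = 2 ^ s + 1 := rfl
  have h1 : 1 ≤ 2 ^ s := Nat.one_le_two_pow
  have hne : u ≠ v := by
    intro h
    have h0 := congrArg Fin.val h
    omega
  have hadj : ((bootStep 3)^[t] (pathG n)).Adj u v := by
    rw [iterate_bootStep_adj]
    refine ⟨hne, pathG_bwalk (by omega) ?_⟩
    have h2 : (2:ℕ) ^ t = 2 ^ s + 2 ^ s := by rw [hs]; ring
    omega
  have hnadj : ¬ ((bootStep 3)^[t - 1] (pathG n)).Adj u v := by
    rw [iterate_bootStep_adj]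
    rintro ⟨-, hb⟩
    have := pathG_bwalk_bound hb
    have hts : t - 1 = s := by omega
    rw [hts] at this
    omega
  intro heq
  rw [heq] at hadj
  exact hnadj hadj

/-- The maximum running time `M_r(n)`: the largest `t` such that some initially infected
graph `G` on `n` vertices satisfies `G_t ≠ G_{t-1}` in the `K_r`-bootstrap process. -/
noncomputable def maxRunTime (r n : ℕ) : ℕ :=
  sSup {t | ∃ G : SimpleGraph (Fin n), (bootStep r)^[t] G ≠ (bootStep r)^[t - 1] G}

/-- For every integer `n ≥ 2`, the maximum running time of the `K_3`-bootstrap percolation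
process is `⌈log₂ (n-1)⌉` (here `Nat.clog 2` is the ceiling of the base-2 logarithm). -/
theorem maxRunTime_K3 (n : ℕ) (hn : 2 ≤ n) : maxRunTime 3 n = Nat.clog 2 (n - 1) := by
  unfold maxRunTime
  apply le_antisymm
  · exact csSup_le' (fun t ht => mem_T_le hn t ht)
  · rcases Nat.lt_or_ge n 3 with h3 | h3
    · have : n = 2 := by omega
      subst this
      simp [Nat.clog_one_right]
    · exact le_csSup ⟨Nat.clog 2 (n - 1), fun t ht => mem_T_le hn t ht⟩ (clog_mem_T h3)
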